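/- arXiv:1511.03200 — 5 statements merged into one kernel-verified Lean document; each statement's English description precedes it below -/
import Mathlib

section
/- There exists a constant C > 0, depending only on the dimension 3, with the following property. Let Ξ : (Fin 3)⁴ → ℝ be a 4-tensor with the symmetries Ξ_{ijkl} = Ξ_{jikl} = Ξ_{ijlk} = Ξ_{klij}; let p⁰, σ_N ∈ ℝ; let τ⁰ be a real symmetric 3×3 matrix with |σ_N| ≤ ‖τ⁰‖_F (Frobenius norm); and suppose there is c > 0 such that for every complex 3×3 matrix η one has c · Σ_{i,j} |η_{ij} + η_{ji}|² ≤ Re Σ_{i,j,k,l} (Ξ_{ijkl} − p⁰ δ_{ik} δ_{jl}) η_{kl} conj(η_{ij}). Define T⁰_{ik} = −p⁰ δ_{ik} + τ⁰_{ik} and π_{ijkl} = Ξ_{ijkl} + T⁰_{ik} δ_{jl} + σ_N (δ_{ik} δ_{jl} − δ_{ij} δ_{kl}). Then for every complex 3×3 matrix η: Re Σ_{i,j,k,l} π_{ijkl} η_{kl} conj(η_{ij}) ≥ c · Σ_{i,j} |η_{ij} + η_{ji}|² − C ‖τ⁰‖_F · Σ_{i,j} |η_{ij}|². -/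
open scoped BigOperators

/-- The Frobenius norm of a real 3×3 matrix. -/
noncomputable def frobNorm (A : Matrix (Fin 3) (Fin 3) ℝ) : ℝ :=
  Real.sqrt (∑ i, ∑ j, (A i j) ^ 2)

lemma frobNorm_nonneg (A : Matrix (Fin 3) (Fin 3) ℝ) : 0 ≤ frobNorm A :=
  Real.sqrt_nonneg _

lemma abs_entry_le_frobNorm (A : Matrix (Fin 3) (Fin 3) ℝ) (i k : Fin 3) :
    |A i k| ≤ frobNorm A := by
  have h : (A i k) ^ 2 ≤ ∑ i', ∑ j', (A i' j') ^ 2 := by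
    have h1 : (A i k) ^ 2 ≤ ∑ j', (A i j') ^ 2 :=
      Finset.single_le_sum (f := fun j' => (A i j') ^ 2) (fun j _ => sq_nonneg _) (Finset.mem_univ k)
    have h2 : (∑ j', (A i j') ^ 2) ≤ ∑ i', ∑ j', (A i' j') ^ 2 :=
      Finset.single_le_sum (f := fun i' => ∑ j', (A i' j') ^ 2) (fun i' _ => Finset.sum_nonneg fun j _ => sq_nonneg _)
        (Finset.mem_univ i)
    linarith
  calc |A i k| = Real.sqrt ((A i k) ^ 2) := (Real.sqrt_sq_eq_abs _).symm
  _ ≤ frobNorm A := Real.sqrt_le_sqrt h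

lemma key_term_bound (Y F : ℝ) (hF : 0 ≤ F) (hY : |Y| ≤ 2 * F) (z w : ℂ) :
    -(F * ((‖z‖) ^ 2 + (‖w‖) ^ 2)) ≤ Y * (z * (starRingEnd ℂ) w).re := by
  have h1 : |(z * (starRingEnd ℂ) w).re| ≤ ‖z‖ * ‖w‖ := by
    calc |(z * (starRingEnd ℂ) w).re| ≤ ‖z * (starRingEnd ℂ) w‖ :=
        Complex.abs_re_le_norm _
    _ = ‖z‖ * ‖w‖ := by rw [norm_mul, Complex.norm_conj]
  have h2 : ‖z‖ * ‖w‖ ≤ ((‖z‖) ^ 2 + (‖w‖) ^ 2) / 2 := by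
    nlinarith [sq_nonneg (‖z‖ - ‖w‖)]
  have h3 : |Y * (z * (starRingEnd ℂ) w).re| ≤
      2 * F * (((‖z‖) ^ 2 + (‖w‖) ^ 2) / 2) := by
    rw [abs_mul]
    have hr : |(z * (starRingEnd ℂ) w).re| ≤
        ((‖z‖) ^ 2 + (‖w‖) ^ 2) / 2 := le_trans h1 h2
    exact mul_le_mul hY hr (abs_nonneg _) (by linarith)
  have h4 := neg_abs_le (Y * (z * (starRingEnd ℂ) w).re)
  nlinarith

theorem garding_pointwise_bound :
    ∃ C : ℝ, 0 < C ∧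
      ∀ (Ξ : Fin 3 → Fin 3 → Fin 3 → Fin 3 → ℝ),
        (∀ i j k l, Ξ i j k l = Ξ j i k l) →
        (∀ i j k l, Ξ i j k l = Ξ i j l k) →
        (∀ i j k l, Ξ i j k l = Ξ k l i j) →
        ∀ (p0 σN : ℝ) (τ0 : Matrix (Fin 3) (Fin 3) ℝ), τ0.IsSymm →
          |σN| ≤ frobNorm τ0 →
          ∀ c : ℝ, 0 < c →
            (∀ η : Matrix (Fin 3) (Fin 3) ℂ,
              c * ∑ i, ∑ j, (‖η i j + η j i‖) ^ 2 ≤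
                (∑ i, ∑ j, ∑ k, ∑ l,
                  ((Ξ i j k l
                      - p0 * (if i = k then 1 else 0) * (if j = l then 1 else 0) : ℝ) : ℂ)
                    * η k l * (starRingEnd ℂ) (η i j)).re) →
            ∀ η : Matrix (Fin 3) (Fin 3) ℂ,
              c * ∑ i, ∑ j, (‖η i j + η j i‖) ^ 2
                  - C * frobNorm τ0 * ∑ i, ∑ j, (‖η i j‖) ^ 2 ≤
                (∑ i, ∑ j, ∑ k, ∑ l,
                  ((Ξ i j k l
                      + (-p0 * (if i = k then 1 else 0) + τ0 i k) * (if j = l then 1 else 0)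
                      + σN * ((if i = k then 1 else 0) * (if j = l then 1 else 0)
                          - (if i = j then 1 else 0) * (if k = l then 1 else 0)) : ℝ) : ℂ)
                    * η k l * (starRingEnd ℂ) (η i j)).re := by
  refine ⟨100, by norm_num, ?_⟩
  intro Ξ hs1 hs2 hs3 p0 σN τ0 hτsymm hσ c hc hstab η
  set F := frobNorm τ0 with hF
  have hF0 : 0 ≤ F := frobNorm_nonneg τ0
  -- the remainder coefficient
  set Y : Fin 3 → Fin 3 → Fin 3 → Fin 3 → ℝ := fun i j k l =>
    τ0 i k * (if j = l then 1 else 0)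
      + σN * ((if i = k then 1 else 0) * (if j = l then 1 else 0)
          - (if i = j then 1 else 0) * (if k = l then 1 else 0)) with hYdef
  have hYbound : ∀ i j k l, |Y i j k l| ≤ 2 * F := by
    intro i j k l
    have hτ : |τ0 i k| ≤ F := abs_entry_le_frobNorm τ0 i k
    have h1 : |τ0 i k * (if j = l then 1 else 0)| ≤ F := by
      rw [abs_mul]
      have : |(if j = l then (1:ℝ) else 0)| ≤ 1 := by split_ifs <;> norm_num
      nlinarith [abs_nonneg (τ0 i k)]
    have h2 : |σN * ((if i = k then (1:ℝ) else 0) * (if j = l then 1 else 0)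
        - (if i = j then 1 else 0) * (if k = l then 1 else 0))| ≤ F := by
      rw [abs_mul]
      have : |((if i = k then (1:ℝ) else 0) * (if j = l then 1 else 0)
          - (if i = j then 1 else 0) * (if k = l then 1 else 0))| ≤ 1 := by
        split_ifs <;> norm_num
      nlinarith [abs_nonneg σN, hσ]
    calc |Y i j k l| ≤ |τ0 i k * (if j = l then 1 else 0)|
        + |σN * ((if i = k then (1:ℝ) else 0) * (if j = l then 1 else 0)
          - (if i = j then 1 else 0) * (if k = l then 1 else 0))| := abs_add_le _ _
    _ ≤ 2 * F := by linarith
  -- split the sum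
  have hsplit : (∑ i, ∑ j, ∑ k, ∑ l,
        ((Ξ i j k l
            + (-p0 * (if i = k then 1 else 0) + τ0 i k) * (if j = l then 1 else 0)
            + σN * ((if i = k then 1 else 0) * (if j = l then 1 else 0)
                - (if i = j then 1 else 0) * (if k = l then 1 else 0)) : ℝ) : ℂ)
          * η k l * (starRingEnd ℂ) (η i j)) =
      (∑ i, ∑ j, ∑ k, ∑ l,
        ((Ξ i j k l
            - p0 * (if i = k then 1 else 0) * (if j = l then 1 else 0) : ℝ) : ℂ)
          * η k l * (starRingEnd ℂ) (η i j)) +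
      (∑ i, ∑ j, ∑ k, ∑ l,
        ((Y i j k l : ℝ) : ℂ) * η k l * (starRingEnd ℂ) (η i j)) := by
    simp only [← Finset.sum_add_distrib]
    refine Finset.sum_congr rfl fun i _ => Finset.sum_congr rfl fun j _ =>
      Finset.sum_congr rfl fun k _ => Finset.sum_congr rfl fun l _ => ?_
    simp only [hYdef]
    push_cast
    ring
  rw [hsplit, Complex.add_re]
  have hA := hstab η
  -- bound the remainder real part
  have hBre : (∑ i, ∑ j, ∑ k, ∑ l,
      ((Y i j k l : ℝ) : ℂ) * η k l * (starRingEnd ℂ) (η i j)).re =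
      ∑ i, ∑ j, ∑ k, ∑ l, Y i j k l * (η k l * (starRingEnd ℂ) (η i j)).re := by
    simp only [Complex.re_sum]
    refine Finset.sum_congr rfl fun i _ => Finset.sum_congr rfl fun j _ =>
      Finset.sum_congr rfl fun k _ => Finset.sum_congr rfl fun l _ => ?_
    rw [mul_assoc, Complex.re_ofReal_mul]
  have hB : -(18 * F * ∑ i, ∑ j, (‖η i j‖) ^ 2) ≤
      (∑ i, ∑ j, ∑ k, ∑ l,
        ((Y i j k l : ℝ) : ℂ) * η k l * (starRingEnd ℂ) (η i j)).re := by
    rw [hBre]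
    have hsum : (∑ i : Fin 3, ∑ j : Fin 3, ∑ k : Fin 3, ∑ l : Fin 3,
        -(F * ((‖η k l‖) ^ 2 + (‖η i j‖) ^ 2))) =
        -(18 * F * ∑ i, ∑ j, (‖η i j‖) ^ 2) := by
      simp only [Fin.sum_univ_three]
      ring
    rw [← hsum]
    refine Finset.sum_le_sum fun i _ => Finset.sum_le_sum fun j _ =>
      Finset.sum_le_sum fun k _ => Finset.sum_le_sum fun l _ => ?_
    exact key_term_bound _ F hF0 (hYbound i j k l) _ _
  have hN0 : 0 ≤ ∑ i, ∑ j, (‖η i j‖) ^ 2 := by positivity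
  have hFN : 0 ≤ F * ∑ i, ∑ j, (‖η i j‖) ^ 2 := mul_nonneg hF0 hN0
  linarith
end

section
/- Let E and H be complex Hilbert spaces and i : E → H an injective continuous linear map with dense range. Let a : E × E → ℂ be a bounded sesquilinear form that is Hermitian (a(u,v) = conj(a(v,u)) for all u, v ∈ E) and coercive on E relative to H: there exist α > 0 and β ≥ 0 such that a(u,u) + β‖i u‖²_H ≥ α‖u‖²_E for all u ∈ E. Define D = { u ∈ E : there exists w ∈ H such that a(u,v) + β⟪i u, i v⟫_H = ⟪w, i v⟫_H for all v ∈ E }. Then the image i(D) is dense in H. -/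
open scoped ComplexInnerProductSpace

theorem domain_dense_in_H
    {E H : Type*}
    [NormedAddCommGroup E] [InnerProductSpace ℂ E] [CompleteSpace E]
    [NormedAddCommGroup H] [InnerProductSpace ℂ H] [CompleteSpace H]
    (i : E →L[ℂ] H) (hinj : Function.Injective i) (hdense : DenseRange i)
    (a : E →L⋆[ℂ] E →L[ℂ] ℂ)
    (herm : ∀ u v : E, a u v = starRingEnd ℂ (a v u))
    (α β : ℝ) (hα : 0 < α) (hβ : 0 ≤ β)
    (hcoer : ∀ u : E, α * ‖u‖ ^ 2 ≤ (a u u).re + β * ‖i u‖ ^ 2) :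
    Dense (i '' {u : E | ∃ w : H, ∀ v : E,
      a u v + (β : ℂ) * ⟪i u, i v⟫ = ⟪w, i v⟫}) := by
  -- the operator T with ⟪T u, v⟫ = a u v + β ⟪i u, i v⟫
  set T : E →L[ℂ] E :=
    InnerProductSpace.continuousLinearMapOfBilin a +
      (β : ℂ) • ((ContinuousLinearMap.adjoint i).comp i) with hTdef
  have hT : ∀ u v : E, ⟪T u, v⟫ = a u v + (β : ℂ) * ⟪i u, i v⟫ := by
    intro u v
    rw [hTdef, ContinuousLinearMap.add_apply, ContinuousLinearMap.smul_apply,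
      ContinuousLinearMap.comp_apply, inner_add_left, inner_smul_left,
      ContinuousLinearMap.adjoint_inner_left,
      InnerProductSpace.continuousLinearMapOfBilin_apply, Complex.conj_ofReal]
  have hco : ∀ u : E, α * ‖u‖ ^ 2 ≤ (⟪T u, u⟫ : ℂ).re := by
    intro u
    rw [hT u u]
    have h2 : (⟪i u, i u⟫ : ℂ) = ((‖i u‖ ^ 2 : ℝ) : ℂ) := by
      rw [inner_self_eq_norm_sq_to_K]; norm_num
    have : ((β : ℂ) * ⟪i u, i u⟫).re = β * ‖i u‖ ^ 2 := by
      rw [h2, ← Complex.ofReal_mul, Complex.ofReal_re]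
    simpa only [Complex.add_re, this] using hcoer u
  have hlow : ∀ u : E, α * ‖u‖ ≤ ‖T u‖ := by
    intro u
    rcases eq_or_ne u 0 with rfl | hu
    · simp
    · have h1 : α * ‖u‖ ^ 2 ≤ ‖T u‖ * ‖u‖ := by
        calc α * ‖u‖ ^ 2 ≤ (⟪T u, u⟫ : ℂ).re := hco u
        _ ≤ ‖(⟪T u, u⟫ : ℂ)‖ := Complex.re_le_norm _
        _ ≤ ‖T u‖ * ‖u‖ := norm_inner_le_norm _ _
      have hun : 0 < ‖u‖ := norm_pos_iff.mpr hu
      nlinarith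
  -- T is surjective
  have hsurj : Function.Surjective T := by
    have hanti : AntilipschitzWith (⟨α, hα.le⟩ : NNReal)⁻¹ T := by
      apply ContinuousLinearMap.antilipschitz_of_bound
      intro x
      show ‖x‖ ≤ α⁻¹ * ‖T x‖
      have := hlow x
      have hα' : (0:ℝ) < α := hα
      calc ‖x‖ = α⁻¹ * (α * ‖x‖) := by field_simp
      _ ≤ α⁻¹ * ‖T x‖ := by
        apply mul_le_mul_of_nonneg_left (hlow x) (by positivity)
    have hclosed : (LinearMap.range (T : E →ₗ[ℂ] E)).topologicalClosure = LinearMap.range (T : E →ₗ[ℂ] E) :=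
      ContinuousLinearMap.closed_range_of_antilipschitz hanti
    have horth : (LinearMap.range (T : E →ₗ[ℂ] E))ᗮ = ⊥ := by
      rw [Submodule.eq_bot_iff]
      intro v hv
      have h0 : (⟪T v, v⟫ : ℂ) = 0 :=
        (Submodule.mem_orthogonal _ v).mp hv (T v) (LinearMap.mem_range_self _ v)
      have := hco v
      rw [h0] at this
      simp at this
      have hv0 : ‖v‖ ^ 2 = 0 := le_antisymm (by nlinarith) (sq_nonneg _)
      rwa [sq_eq_zero_iff, norm_eq_zero] at hv0
    have : LinearMap.range (T : E →ₗ[ℂ] E) = ⊤ := by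
      rw [← hclosed, Submodule.topologicalClosure_eq_top_iff, horth]
    intro z
    exact (LinearMap.range_eq_top.mp this) z
  -- for each y : H there is u with witness y
  have hsolve : ∀ y : H, ∃ u : E,
      (∀ v : E, a u v + (β : ℂ) * ⟪i u, i v⟫ = ⟪y, i v⟫) := by
    intro y
    set f : E →L[ℂ] ℂ := (innerSL ℂ y).comp i with hf
    obtain ⟨u, hu⟩ := hsurj ((InnerProductSpace.toDual ℂ E).symm f)
    refine ⟨u, fun v => ?_⟩
    have h1 : (⟪T u, v⟫ : ℂ) = f v := by
      rw [hu]; exact InnerProductSpace.toDual_symm_apply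
    rw [← hT u v, h1, hf]
    simp
  -- the domain is a submodule
  set DE : Submodule ℂ E :=
    { carrier := {u : E | ∃ w : H, ∀ v : E,
        a u v + (β : ℂ) * ⟪i u, i v⟫ = ⟪w, i v⟫}
      add_mem' := by
        rintro x y ⟨wx, hwx⟩ ⟨wy, hwy⟩
        refine ⟨wx + wy, fun v => ?_⟩
        rw [map_add, ContinuousLinearMap.add_apply, map_add, inner_add_left,
          inner_add_left]
        rw [← hwx v, ← hwy v]; ring
      zero_mem' := ⟨0, fun v => by simp⟩
      smul_mem' := by
        rintro c x ⟨w, hw⟩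
        refine ⟨c • w, fun v => ?_⟩
        rw [map_smulₛₗ, ContinuousLinearMap.smul_apply, map_smul, inner_smul_left,
          inner_smul_left, ← hw v]
        simp [smul_eq_mul]; ring } with hDE
  have himg : i '' {u : E | ∃ w : H, ∀ v : E,
      a u v + (β : ℂ) * ⟪i u, i v⟫ = ⟪w, i v⟫}
      = ↑(DE.map (i : E →ₗ[ℂ] H)) := by
    rw [Submodule.map_coe]; rfl
  rw [himg]
  rw [Submodule.dense_iff_topologicalClosure_eq_top,
    Submodule.topologicalClosure_eq_top_iff, Submodule.eq_bot_iff]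
  intro y hy
  obtain ⟨u, hu⟩ := hsolve y
  have hmem : i u ∈ DE.map (i : E →ₗ[ℂ] H) :=
    Submodule.mem_map_of_mem ⟨y, hu⟩
  have h0 : (⟪i u, y⟫ : ℂ) = 0 := (Submodule.mem_orthogonal _ y).mp hy _ hmem
  have h0' : (⟪y, i u⟫ : ℂ) = 0 := by
    rw [← inner_conj_symm, h0, map_zero]
  -- coercivity forces u = 0
  have hTu : (⟪T u, u⟫ : ℂ) = 0 := by rw [hT u u, hu u, h0']
  have hu0 : u = 0 := by
    have := hco u
    rw [hTu] at this
    simp at this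
    have hu2 : ‖u‖ ^ 2 = 0 := le_antisymm (by nlinarith) (sq_nonneg _)
    rwa [sq_eq_zero_iff, norm_eq_zero] at hu2
  -- then y ⊥ range i, hence y = 0
  have hyv : ∀ v : E, (⟪y, i v⟫ : ℂ) = 0 := by
    intro v
    rw [← hu v, hu0]
    simp
  have hfun : (innerSL ℂ y).comp i = (0 : E →L[ℂ] ℂ) := by
    ext v; simpa using hyv v
  have hally : ∀ h : H, (⟪y, h⟫ : ℂ) = 0 := by
    have heq : (innerSL ℂ y : H → ℂ) = (0 : H →L[ℂ] ℂ) := by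
      apply Continuous.ext_on hdense (innerSL ℂ y).continuous
        (ContinuousLinearMap.continuous _)
      rintro _ ⟨v, rfl⟩
      simpa using hyv v
    intro h
    have := congrFun heq h
    simpa using this
  have := hally y
  rwa [inner_self_eq_zero] at this
end

section
/- Let E and H be complex Hilbert spaces, i : E → H a continuous linear map, a : E × E → ℂ a bounded Hermitian sesquilinear form (a(u,v) = conj(a(v,u))), and R : H → H a bounded linear operator with Re⟪R h, h⟫_H = 0 for all h ∈ H. Let u : ℝ → E be differentiable with derivative u' : ℝ → E, and suppose the map t ↦ i(u'(t)) from ℝ to H is differentiable with derivative u'' : ℝ → H. Assume that for every t ∈ ℝ and every v ∈ E: ⟪u''(t), i v⟫_H + ⟪2R(i(u'(t))), i v⟫_H + a(u(t), v) = 0. Then the energy t ↦ ‖i(u'(t))‖²_H + Re a(u(t), u(t)) is constant on ℝ. -/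
open scoped ComplexInnerProductSpace

theorem energy_conservation
    {E H : Type*}
    [NormedAddCommGroup E] [InnerProductSpace ℂ E]
    [NormedAddCommGroup H] [InnerProductSpace ℂ H]
    (i : E →L[ℂ] H)
    (a : E →L⋆[ℂ] E →L[ℂ] ℂ)
    (herm : ∀ u v : E, a u v = starRingEnd ℂ (a v u))
    (R : H →L[ℂ] H) (hR : ∀ h : H, (⟪R h, h⟫).re = 0)
    (u u' : ℝ → E) (u'' : ℝ → H)
    (hu : ∀ t : ℝ, HasDerivAt u (u' t) t)
    (hu' : ∀ t : ℝ, HasDerivAt (fun s => i (u' s)) (u'' t) t)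
    (heq : ∀ t : ℝ, ∀ v : E,
      ⟪u'' t, i v⟫ + ⟪((2 : ℂ) • R) (i (u' t)), i v⟫ + a (u t) v = 0) :
    ∀ t : ℝ,
      ‖i (u' t)‖ ^ 2 + (a (u t) (u t)).re
        = ‖i (u' 0)‖ ^ 2 + (a (u 0) (u 0)).re := by
  -- the bilinear map (over ℝ) given by a
  have hB : IsBoundedBilinearMap ℝ (fun p : E × E => a p.1 p.2) :=
    { add_left := fun x₁ x₂ y => by simp
      smul_left := fun c x y => by
        rw [← algebraMap_smul ℂ c x, map_smulₛₗ]
        simp [Complex.real_smul, Algebra.algebraMap_eq_smul_one]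
      add_right := fun x y₁ y₂ => by simp
      smul_right := fun c x y => by
        rw [← algebraMap_smul ℂ c y, map_smul]
        simp [Complex.real_smul, Algebra.algebraMap_eq_smul_one]
      bound := ⟨‖a‖ + 1, by positivity, fun x y => by
        calc ‖a x y‖ ≤ ‖a‖ * ‖x‖ * ‖y‖ := a.le_opNorm₂ x y
        _ ≤ (‖a‖ + 1) * ‖x‖ * ‖y‖ :=
            mul_le_mul_of_nonneg_right
              (mul_le_mul_of_nonneg_right (by linarith) (norm_nonneg x)) (norm_nonneg y)⟩ }
  -- derivative of t ↦ a (u t) (u t)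
  have hA : ∀ t : ℝ, HasDerivAt (fun s => a (u s) (u s))
      (a (u t) (u' t) + a (u' t) (u t)) t := by
    intro t
    have := (hB.hasFDerivAt (u t, u t)).comp_hasDerivAt t ((hu t).prodMk (hu t))
    simp at this
    exact this
  -- derivative of t ↦ ⟪i (u' t), i (u' t)⟫
  have hI : ∀ t : ℝ, HasDerivAt (fun s => (⟪i (u' s), i (u' s)⟫ : ℂ))
      (⟪i (u' t), u'' t⟫ + ⟪u'' t, i (u' t)⟫) t :=
    fun t => (hu' t).inner ℂ (hu' t)
  set f : ℝ → ℝ := fun t => ‖i (u' t)‖ ^ 2 + (a (u t) (u t)).re with hf_def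
  have hf : ∀ t : ℝ, HasDerivAt f 0 t := by
    intro t
    have hF : HasDerivAt (fun s => (⟪i (u' s), i (u' s)⟫ : ℂ) + a (u s) (u s))
        ((⟪i (u' t), u'' t⟫ + ⟪u'' t, i (u' t)⟫) + (a (u t) (u' t) + a (u' t) (u t))) t :=
      (hI t).add (hA t)
    have hre : HasDerivAt (fun s => ((⟪i (u' s), i (u' s)⟫ : ℂ) + a (u s) (u s)).re)
        (((⟪i (u' t), u'' t⟫ + ⟪u'' t, i (u' t)⟫) + (a (u t) (u' t) + a (u' t) (u t))).re) t :=
      Complex.reCLM.hasFDerivAt.comp_hasDerivAt t hF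
    have hfun : f = fun s => ((⟪i (u' s), i (u' s)⟫ : ℂ) + a (u s) (u s)).re := by
      funext s
      simp [hf_def, Complex.add_re, ← inner_self_eq_norm_sq (𝕜 := ℂ) (i (u' s))]
    -- the derivative vanishes
    have key := congrArg Complex.re (heq t (u' t))
    have hRre : (⟪((2 : ℂ) • R) (i (u' t)), i (u' t)⟫ : ℂ).re = 0 := by
      have : (⟪((2 : ℂ) • R) (i (u' t)), i (u' t)⟫ : ℂ)
          = (starRingEnd ℂ 2) * ⟪R (i (u' t)), i (u' t)⟫ := by
        rw [ContinuousLinearMap.smul_apply, inner_smul_left]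
      rw [this]
      simp [hR (i (u' t))]
    have key' : (⟪u'' t, i (u' t)⟫ : ℂ).re + (a (u t) (u' t)).re = 0 := by
      simp only [Complex.add_re, Complex.zero_re] at key
      rw [hRre] at key
      linarith
    have h1 : (⟪i (u' t), u'' t⟫ : ℂ).re = (⟪u'' t, i (u' t)⟫ : ℂ).re := by
      simpa using inner_re_symm (𝕜 := ℂ) (i (u' t)) (u'' t)
    have h2 : (a (u' t) (u t)).re = (a (u t) (u' t)).re := by
      rw [herm (u' t) (u t)]
      simp
    have hD : (((⟪i (u' t), u'' t⟫ : ℂ) + ⟪u'' t, i (u' t)⟫)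
        + (a (u t) (u' t) + a (u' t) (u t))).re = 0 := by
      simp only [Complex.add_re]
      rw [h1, h2]
      linarith
    rw [hfun]
    rw [hD] at hre
    exact hre
  intro t
  exact is_const_of_deriv_eq_zero (fun x => (hf x).differentiableAt)
    (fun x => (hf x).deriv) t 0
end

section
/- Let X be a real Banach space, T > 0, C ≥ 0, and let k : ℝ × ℝ → (X →L X) be continuous on [0,T] × [0,T] with ‖k(t,s)‖ ≤ C (operator norm) for all 0 ≤ s ≤ t ≤ T. Then for every continuous F : [0,T] → X there exists a unique continuous g : [0,T] → X satisfying the Volterra equation g(t) = F(t) + ∫₀^t k(t,s)(g(s)) ds for all t ∈ [0,T]; moreover sup_{t ∈ [0,T]} ‖g(t)‖ ≤ e^{C T} · sup_{t ∈ [0,T]} ‖F(t)‖. -/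
open MeasureTheory BoundedContinuousFunction

lemma gronwall_int {T C M : ℝ} (hC : 0 ≤ C) (hM : 0 ≤ M)
    {u : ℝ → ℝ} (hu : Continuous u) (hu0 : ∀ t, 0 ≤ u t)
    (hle : ∀ t ∈ Set.Icc (0:ℝ) T, u t ≤ M + C * ∫ s in (0:ℝ)..t, u s) :
    ∀ t ∈ Set.Icc (0:ℝ) T, u t ≤ M * Real.exp (C * t) := by
  set φ : ℝ → ℝ := fun t => ∫ s in (0:ℝ)..t, u s with hφdef
  have hφcont : Continuous φ :=
    intervalIntegral.continuous_primitive (fun a b => hu.intervalIntegrable a b) 0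
  have hφ0 : ∀ x ∈ Set.Icc (0:ℝ) T, 0 ≤ φ x := fun x hx =>
    intervalIntegral.integral_nonneg hx.1 fun s _ => hu0 s
  have key : ∀ x ∈ Set.Icc (0:ℝ) T, ‖φ x‖ ≤ gronwallBound 0 C M (x - 0) := by
    apply norm_le_gronwallBound_of_norm_deriv_right_le hφcont.continuousOn
      (fun x _ => ((hu.integral_hasStrictDerivAt 0 x).hasDerivAt).hasDerivWithinAt)
      (by simp [hφdef])
    intro x hx
    have hx' : x ∈ Set.Icc (0:ℝ) T := ⟨hx.1, hx.2.le⟩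
    rw [Real.norm_of_nonneg (hu0 x), Real.norm_of_nonneg (hφ0 x hx')]
    linarith [hle x hx']
  intro t ht
  have h1 := hle t ht
  have h2 := key t ht
  rw [Real.norm_of_nonneg (hφ0 t ht), sub_zero] at h2
  rcases eq_or_lt_of_le hC with hC0 | hCpos
  · have : (0:ℝ) < Real.exp (C * t) := Real.exp_pos _
    nlinarith [hφ0 t ht, Real.one_le_exp (mul_nonneg hC ht.1)]
  · rw [gronwallBound_of_K_ne_0 hCpos.ne'] at h2
    have := Real.exp_pos (C * t)
    have h3 : C * φ t ≤ C * (0 * Real.exp (C * t) + M / C * (Real.exp (C * t) - 1)) :=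
      mul_le_mul_of_nonneg_left h2 hC
    rw [mul_add, ← mul_assoc, ← mul_assoc, mul_div_cancel₀ _ hCpos.ne'] at h3
    nlinarith

theorem volterra_equation_wellposed
    {X : Type*} [NormedAddCommGroup X] [NormedSpace ℝ X] [CompleteSpace X]
    (T C : ℝ) (hT : 0 < T) (hC : 0 ≤ C)
    (k : ℝ → ℝ → (X →L[ℝ] X))
    (hk : ContinuousOn (fun q : ℝ × ℝ => k q.1 q.2) (Set.Icc 0 T ×ˢ Set.Icc 0 T))
    (hbound : ∀ s t : ℝ, 0 ≤ s → s ≤ t → t ≤ T → ‖k t s‖ ≤ C)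
    (F : ℝ → X) (hF : ContinuousOn F (Set.Icc 0 T)) :
    ∃ g : ℝ → X,
      (ContinuousOn g (Set.Icc 0 T) ∧
        (∀ t ∈ Set.Icc (0:ℝ) T, g t = F t + ∫ s in (0:ℝ)..t, k t s (g s)) ∧
        (∀ t ∈ Set.Icc (0:ℝ) T,
          ‖g t‖ ≤ Real.exp (C * T) * ⨆ s : Set.Icc (0:ℝ) T, ‖F s‖)) ∧
      (∀ g' : ℝ → X, ContinuousOn g' (Set.Icc 0 T) →
        (∀ t ∈ Set.Icc (0:ℝ) T, g' t = F t + ∫ s in (0:ℝ)..t, k t s (g' s)) →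
        ∀ t ∈ Set.Icc (0:ℝ) T, g' t = g t) := by
  have hT' : (0:ℝ) ≤ T := hT.le
  -- clamping map
  set σ : ℝ → ℝ := fun t => max 0 (min t T) with hσdef
  have hσcont : Continuous σ := continuous_const.max (continuous_id.min continuous_const)
  have hσmem : ∀ t, σ t ∈ Set.Icc (0:ℝ) T := fun t =>
    ⟨le_max_left _ _, max_le hT' (min_le_right _ _)⟩
  have hσid : ∀ t ∈ Set.Icc (0:ℝ) T, σ t = t := by
    intro t ht
    simp only [hσdef, min_eq_left ht.2, max_eq_right ht.1]
  have hσs : ∀ {t s : ℝ}, 0 ≤ s → s ≤ σ t → σ s = s := by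
    intro t s h0 h1
    exact hσid s ⟨h0, h1.trans (hσmem t).2⟩
  -- clamped kernel and data
  set kk : ℝ → ℝ → (X →L[ℝ] X) := fun t s => k (σ t) (σ s) with hkkdef
  have hkkcont : Continuous (fun q : ℝ × ℝ => kk q.1 q.2) := by
    apply hk.comp_continuous
      ((hσcont.comp continuous_fst).prodMk (hσcont.comp continuous_snd))
    exact fun q => ⟨hσmem _, hσmem _⟩
  have hkkbound : ∀ t s : ℝ, 0 ≤ s → s ≤ σ t → ‖kk t s‖ ≤ C := by
    intro t s h0 h1
    have : kk t s = k (σ t) s := by simp only [hkkdef, hσs h0 h1]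
    rw [this]
    exact hbound s (σ t) h0 h1 (hσmem t).2
  set FF : ℝ → X := fun t => F (σ t) with hFFdef
  have hFFcont : Continuous FF := hF.comp_continuous hσcont hσmem
  obtain ⟨MF, hMF⟩ : ∃ MF, ∀ x ∈ Set.Icc (0:ℝ) T, ‖F x‖ ≤ MF :=
    IsCompact.exists_bound_of_continuousOn isCompact_Icc hF
  -- the weight
  set β : ℝ := 2 * (C + 1) with hβdef
  have hβpos : (0:ℝ) < β := by positivity
  set w : ℝ → ℝ := fun t => Real.exp (β * σ t) with hwdef
  have hwcont : Continuous w := Real.continuous_exp.comp (continuous_const.mul hσcont)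
  have hwpos : ∀ t, 0 < w t := fun t => Real.exp_pos _
  have hwle : ∀ t, w t ≤ Real.exp (β * T) := fun t =>
    Real.exp_le_exp.2 (mul_le_mul_of_nonneg_left (hσmem t).2 hβpos.le)
  -- the contraction on bounded continuous functions
  set Ψraw : (ℝ →ᵇ X) → ℝ → X := fun h t =>
    (Real.exp (-(β * σ t))) • (FF t + ∫ s in (0:ℝ)..σ t, kk t s (w s • h s)) with hΨrawdef
  have hintcont : ∀ (h : ℝ →ᵇ X), Continuous fun q : ℝ × ℝ => kk q.1 q.2 (w q.2 • h q.2) :=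
    fun h => hkkcont.clm_apply ((hwcont.comp continuous_snd).smul
      (h.continuous.comp continuous_snd))
  have hintcont1 : ∀ (h : ℝ →ᵇ X) (t : ℝ), Continuous fun s => kk t s (w s • h s) := by
    intro h t
    exact (hintcont h).comp (Continuous.prodMk_right t)
  have hΨcont : ∀ h, Continuous (Ψraw h) := by
    intro h
    apply Continuous.smul (by fun_prop)
    apply hFFcont.add
    exact intervalIntegral.continuous_parametric_intervalIntegral_of_continuous
      (f := fun t s => kk t s (w s • h s)) (hintcont h) hσcont
  have hintbnd : ∀ (h h' : ℝ →ᵇ X) (t : ℝ) (s : ℝ), s ∈ Set.Ioc (0:ℝ) (σ t) →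
      ‖kk t s (w s • h s - w s • h' s)‖ ≤ C * Real.exp (β * s) * (dist h h') := by
    intro h h' t s hs
    calc ‖kk t s (w s • h s - w s • h' s)‖ ≤ ‖kk t s‖ * ‖w s • h s - w s • h' s‖ :=
          ContinuousLinearMap.le_opNorm _ _
    _ ≤ C * (w s * dist (h s) (h' s)) := by
        apply mul_le_mul (hkkbound t s hs.1.le hs.2) ?_ (norm_nonneg _) hC
        rw [← smul_sub, norm_smul, Real.norm_of_nonneg (hwpos s).le, ← dist_eq_norm]
    _ ≤ C * (Real.exp (β * s) * dist h h') := by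
        have hws : w s = Real.exp (β * s) := by
          simp only [hwdef, hσs hs.1.le hs.2]
        rw [hws]
        exact mul_le_mul_of_nonneg_left
          (mul_le_mul_of_nonneg_left (BoundedContinuousFunction.dist_coe_le_dist s)
            (Real.exp_pos _).le) hC
    _ = C * Real.exp (β * s) * dist h h' := by ring
  have hΨbdd : ∀ (h : ℝ →ᵇ X) (t : ℝ),
      ‖Ψraw h t‖ ≤ MF + C * Real.exp (β * T) * ‖h‖ * T := by
    intro h t
    rw [hΨrawdef]
    simp only
    rw [norm_smul, Real.norm_of_nonneg (Real.exp_pos _).le]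
    have h1 : Real.exp (-(β * σ t)) ≤ 1 := by
      rw [Real.exp_le_one_iff]
      simp only [neg_nonpos]
      exact mul_nonneg hβpos.le (hσmem t).1
    have h2 : ‖FF t + ∫ s in (0:ℝ)..σ t, kk t s (w s • h s)‖ ≤
        MF + C * Real.exp (β * T) * ‖h‖ * T := by
      refine (norm_add_le _ _).trans (add_le_add (hMF _ (hσmem t)) ?_)
      have : ‖∫ s in (0:ℝ)..σ t, kk t s (w s • h s)‖ ≤
          (C * Real.exp (β * T) * ‖h‖) * |σ t - 0| := by
        apply intervalIntegral.norm_integral_le_of_norm_le_const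
        intro x hx
        rw [Set.uIoc_of_le (hσmem t).1] at hx
        calc ‖kk t x (w x • h x)‖ ≤ ‖kk t x‖ * ‖w x • h x‖ :=
              ContinuousLinearMap.le_opNorm _ _
        _ ≤ C * (Real.exp (β * T) * ‖h‖) := by
            apply mul_le_mul (hkkbound t x hx.1.le hx.2) ?_ (norm_nonneg _) hC
            rw [norm_smul, Real.norm_of_nonneg (hwpos x).le]
            exact mul_le_mul (hwle x) (h.norm_coe_le_norm x) (norm_nonneg _)
              (Real.exp_pos _).le
        _ = C * Real.exp (β * T) * ‖h‖ := by ring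
      refine this.trans ?_
      rw [sub_zero, abs_of_nonneg (hσmem t).1]
      exact mul_le_mul_of_nonneg_left (hσmem t).2 (by positivity)
    calc Real.exp (-(β * σ t)) * ‖FF t + ∫ s in (0:ℝ)..σ t, kk t s (w s • h s)‖
        ≤ 1 * (MF + C * Real.exp (β * T) * ‖h‖ * T) :=
          mul_le_mul h1 h2 (norm_nonneg _) one_pos.le
    _ = MF + C * Real.exp (β * T) * ‖h‖ * T := one_mul _
  set Ψ : (ℝ →ᵇ X) → (ℝ →ᵇ X) := fun h =>
    BoundedContinuousFunction.ofNormedAddCommGroup (Ψraw h) (hΨcont h) _ (hΨbdd h) with hΨdef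
  have hΨapp : ∀ h t, Ψ h t = Ψraw h t := fun h t => rfl
  have hcontr : ContractingWith (1/2 : NNReal) Ψ := by
    constructor
    · exact NNReal.half_lt_self one_ne_zero
    apply LipschitzWith.of_dist_le_mul
    intro h h'
    have hhalf : (((1:NNReal)/2 : NNReal) : ℝ) = 1/2 := by norm_num
    rw [hhalf, BoundedContinuousFunction.dist_le (by positivity)]
    intro t
    rw [dist_eq_norm, hΨapp, hΨapp, hΨrawdef]
    simp only
    rw [← smul_sub, add_sub_add_left_eq_sub,
      ← intervalIntegral.integral_sub ((hintcont1 h t).intervalIntegrable _ _)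
        ((hintcont1 h' t).intervalIntegrable _ _)]
    have hint_eq : ∀ s : ℝ, kk t s (w s • h s) - kk t s (w s • h' s)
        = kk t s (w s • h s - w s • h' s) := fun s => (map_sub _ _ _).symm
    simp only [hint_eq]
    rw [norm_smul, Real.norm_of_nonneg (Real.exp_pos _).le]
    set D := dist h h' with hD
    have hD0 : (0:ℝ) ≤ D := dist_nonneg
    have hbnd : ‖∫ s in (0:ℝ)..σ t, kk t s (w s • h s - w s • h' s)‖ ≤
        |∫ s in (0:ℝ)..σ t, C * Real.exp (β * s) * D| := by
      apply intervalIntegral.norm_integral_le_abs_of_norm_le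
      · refine (MeasureTheory.ae_restrict_iff' measurableSet_uIoc).2
          (Filter.Eventually.of_forall ?_)
        intro s hs
        rw [Set.uIoc_of_le (hσmem t).1] at hs
        exact hintbnd h h' t s hs
      · exact (Continuous.intervalIntegrable (by fun_prop) _ _)
    have hcalc : (∫ s in (0:ℝ)..σ t, C * Real.exp (β * s) * D)
        = C * D * (β⁻¹ * (Real.exp (β * σ t) - 1)) := by
      have h1 : ∀ s:ℝ, C * Real.exp (β * s) * D = (C*D) * Real.exp (β * s) :=
        fun s => by ring
      simp only [h1]
      rw [intervalIntegral.integral_const_mul,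
        intervalIntegral.integral_comp_mul_left (fun x => Real.exp x) hβpos.ne',
        mul_zero, integral_exp, smul_eq_mul, Real.exp_zero]
    refine le_trans (mul_le_mul_of_nonneg_left hbnd (Real.exp_pos _).le) ?_
    rw [hcalc]
    set x := Real.exp (β * σ t) with hx
    have hx1 : (1:ℝ) ≤ x := Real.one_le_exp (mul_nonneg hβpos.le (hσmem t).1)
    have hx0 : (0:ℝ) < x := lt_of_lt_of_le one_pos hx1
    rw [abs_of_nonneg (mul_nonneg (mul_nonneg hC hD0)
      (mul_nonneg (inv_nonneg.2 hβpos.le) (sub_nonneg.2 hx1))), Real.exp_neg]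
    have step1 : x⁻¹ * (C * D * (β⁻¹ * (x - 1))) ≤ x⁻¹ * (C * D * (β⁻¹ * x)) := by
      gcongr
      linarith
    have step2 : x⁻¹ * (C * D * (β⁻¹ * x)) = C * β⁻¹ * D := by
      field_simp
    have step3 : C * β⁻¹ ≤ 1/2 := by
      rw [mul_inv_le_iff₀ hβpos, hβdef]
      linarith
    calc x⁻¹ * (C * D * (β⁻¹ * (x - 1))) ≤ C * β⁻¹ * D := step1.trans_eq step2
    _ ≤ 1/2 * D := mul_le_mul_of_nonneg_right step3 hD0
  haveI : Nonempty (ℝ →ᵇ X) := ⟨0⟩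
  set h0 : ℝ →ᵇ X := ContractingWith.fixedPoint Ψ hcontr with hh0
  have hfix : Ψ h0 = h0 := hcontr.fixedPoint_isFixedPt
  set g : ℝ → X := fun t => w t • h0 t with hgdef
  have hgcont : Continuous g := hwcont.smul h0.continuous
  have geq : ∀ t, g t = FF t + ∫ s in (0:ℝ)..σ t, kk t s (g s) := by
    intro t
    have h1 : h0 t = Ψraw h0 t := by
      conv_lhs => rw [← hfix]
      exact hΨapp h0 t
    calc g t = w t • Ψraw h0 t := by rw [hgdef]; simp only; rw [h1]
    _ = FF t + ∫ s in (0:ℝ)..σ t, kk t s (g s) := by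
        rw [hΨrawdef]
        simp only [hgdef, hwdef, smul_smul, ← Real.exp_add]
        rw [add_neg_cancel, Real.exp_zero, one_smul]
  -- the equation on [0, T]
  have hgeq : ∀ t ∈ Set.Icc (0:ℝ) T, g t = F t + ∫ s in (0:ℝ)..t, k t s (g s) := by
    intro t ht
    have h1 := geq t
    have hFFt : FF t = F t := by rw [hFFdef]; simp only; rw [hσid t ht]
    rw [hσid t ht, hFFt] at h1
    rw [h1]
    congr 1
    apply intervalIntegral.integral_congr
    intro s hs
    rw [Set.uIcc_of_le ht.1] at hs
    have hs' : s ∈ Set.Icc (0:ℝ) T := ⟨hs.1, hs.2.trans ht.2⟩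
    simp only [hkkdef, hσid t ht, hσid s hs']
  -- the a priori bound
  set M : ℝ := ⨆ s : Set.Icc (0:ℝ) T, ‖F s‖ with hMdef
  have hbddM : BddAbove (Set.range fun s : Set.Icc (0:ℝ) T => ‖F s‖) := by
    have him : (Set.range fun s : Set.Icc (0:ℝ) T => ‖F s‖)
        = (fun x => ‖F x‖) '' Set.Icc 0 T := (Set.image_eq_range (fun x => ‖F x‖) (Set.Icc 0 T)).symm
    rw [him]
    exact (isCompact_Icc.image_of_continuousOn hF.norm).bddAbove
  have hFM : ∀ t ∈ Set.Icc (0:ℝ) T, ‖F t‖ ≤ M := fun t ht =>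
    le_ciSup hbddM (⟨t, ht⟩ : Set.Icc (0:ℝ) T)
  have hM0 : (0:ℝ) ≤ M := le_trans (norm_nonneg (F 0)) (hFM 0 ⟨le_refl 0, hT'⟩)
  have hker : ∀ t ∈ Set.Icc (0:ℝ) T, ContinuousOn (fun s => k t s) (Set.Icc 0 t) := by
    intro t ht
    have : ContinuousOn (fun s : ℝ => (t, s)) (Set.Icc 0 t) :=
      (continuous_const.prodMk continuous_id).continuousOn
    refine (hk.comp this ?_)
    intro s hs
    exact ⟨ht, ⟨hs.1, hs.2.trans ht.2⟩⟩
  have hgle : ∀ t ∈ Set.Icc (0:ℝ) T, ‖g t‖ ≤ M + C * ∫ s in (0:ℝ)..t, ‖g s‖ := by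
    intro t ht
    rw [hgeq t ht]
    refine (norm_add_le _ _).trans (add_le_add (hFM t ht) ?_)
    have h2 : ‖∫ s in (0:ℝ)..t, k t s (g s)‖ ≤ |∫ s in (0:ℝ)..t, C * ‖g s‖| := by
      apply intervalIntegral.norm_integral_le_abs_of_norm_le
      · refine (MeasureTheory.ae_restrict_iff' measurableSet_uIoc).2
          (Filter.Eventually.of_forall ?_)
        intro s hs
        rw [Set.uIoc_of_le ht.1] at hs
        calc ‖k t s (g s)‖ ≤ ‖k t s‖ * ‖g s‖ := ContinuousLinearMap.le_opNorm _ _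
        _ ≤ C * ‖g s‖ := mul_le_mul_of_nonneg_right
            (hbound s t hs.1.le hs.2 ht.2) (norm_nonneg _)
      · exact (Continuous.intervalIntegrable (by fun_prop) _ _)
    refine h2.trans ?_
    rw [intervalIntegral.integral_const_mul, abs_of_nonneg (mul_nonneg hC
      (intervalIntegral.integral_nonneg ht.1 fun s _ => norm_nonneg _))]
  have hgbound : ∀ t ∈ Set.Icc (0:ℝ) T, ‖g t‖ ≤ Real.exp (C * T) * M := by
    intro t ht
    have := gronwall_int hC hM0 hgcont.norm (fun s => norm_nonneg _) hgle t ht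
    refine this.trans ?_
    rw [mul_comm (Real.exp (C * T)) M]
    exact mul_le_mul_of_nonneg_left
      (Real.exp_le_exp.2 (mul_le_mul_of_nonneg_left ht.2 hC)) hM0
  refine ⟨g, ⟨hgcont.continuousOn, hgeq, fun t ht => (hgbound t ht).trans_eq (by rw [hMdef])⟩, ?_⟩
  -- uniqueness
  intro g' hg'c hg'eq
  set g2 : ℝ → X := fun t => g' (σ t) with hg2def
  have hg2cont : Continuous g2 := hg'c.comp_continuous hσcont hσmem
  have hg2id : ∀ t ∈ Set.Icc (0:ℝ) T, g2 t = g' t := by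
    intro t ht; rw [hg2def]; simp only; rw [hσid t ht]
  set u : ℝ → ℝ := fun t => ‖g2 t - g t‖ with hudef
  have hucont : Continuous u := (hg2cont.sub hgcont).norm
  have hule : ∀ t ∈ Set.Icc (0:ℝ) T, u t ≤ 0 + C * ∫ s in (0:ℝ)..t, u s := by
    intro t ht
    have hint1 : IntervalIntegrable (fun s => k t s (g' s)) volume 0 t := by
      apply ContinuousOn.intervalIntegrable
      rw [Set.uIcc_of_le ht.1]
      exact (hker t ht).clm_apply (hg'c.mono (Set.Icc_subset_Icc_right ht.2))
    have hint2 : IntervalIntegrable (fun s => k t s (g s)) volume 0 t := by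
      apply ContinuousOn.intervalIntegrable
      rw [Set.uIcc_of_le ht.1]
      exact (hker t ht).clm_apply hgcont.continuousOn
    have hdiff : g2 t - g t = ∫ s in (0:ℝ)..t, (k t s (g' s) - k t s (g s)) := by
      rw [hg2id t ht, hg'eq t ht, hgeq t ht, add_sub_add_left_eq_sub,
        intervalIntegral.integral_sub hint1 hint2]
    have h2 : u t ≤ |∫ s in (0:ℝ)..t, C * u s| := by
      rw [hudef]
      simp only
      rw [hdiff]
      apply intervalIntegral.norm_integral_le_abs_of_norm_le
      · refine (MeasureTheory.ae_restrict_iff' measurableSet_uIoc).2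
          (Filter.Eventually.of_forall ?_)
        intro s hs
        rw [Set.uIoc_of_le ht.1] at hs
        have hs' : s ∈ Set.Icc (0:ℝ) T := ⟨hs.1.le, hs.2.trans ht.2⟩
        rw [← map_sub]
        calc ‖k t s (g' s - g s)‖ ≤ ‖k t s‖ * ‖g' s - g s‖ :=
              ContinuousLinearMap.le_opNorm _ _
        _ ≤ C * u s := by
            rw [hudef]
            simp only
            rw [hg2id s hs']
            exact mul_le_mul_of_nonneg_right
              (hbound s t hs.1.le hs.2 ht.2) (norm_nonneg _)
      · exact (Continuous.intervalIntegrable (by fun_prop) _ _)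
    refine h2.trans ?_
    rw [intervalIntegral.integral_const_mul, abs_of_nonneg (mul_nonneg hC
      (intervalIntegral.integral_nonneg ht.1 fun s _ => norm_nonneg _))]
    linarith [le_refl (C * ∫ s in (0:ℝ)..t, u s)]
  intro t ht
  have := gronwall_int hC (le_refl (0:ℝ)) hucont (fun s => norm_nonneg _) hule t ht
  rw [zero_mul] at this
  have hu0 : u t = 0 := le_antisymm this (norm_nonneg _)
  have : g2 t - g t = 0 := by rwa [hudef, norm_eq_zero] at hu0
  rw [sub_eq_zero] at this
  rw [← hg2id t ht]
  exact this
end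

section
/- Let M be a real symmetric 3×3 matrix with trace M = 0 and det M = 0. Then there exist M₀ ≥ 0 and unit vectors n, d ∈ ℝ³ with n · d = 0 such that M_{ij} = M₀ (n_i d_j + d_i n_j) for all i, j. -/
open scoped RealInnerProductSpace

-- key lemma with nonneg eigenvalue
lemma dc_key (M : Matrix (Fin 3) (Fin 3) ℝ) (μ : ℝ) (hμ : 0 ≤ μ) (v w : Fin 3 → ℝ)
    (hv : ∑ i, v i * v i = 1) (hw : ∑ i, w i * w i = 1)
    (hvw : ∑ i, v i * w i = 0)
    (hM : ∀ i j, M i j = μ * (v i * v j) + (-μ) * (w i * w j)) :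
    ∃ M₀ : ℝ, 0 ≤ M₀ ∧
      ∃ n d : EuclideanSpace ℝ (Fin 3),
        ‖n‖ = 1 ∧ ‖d‖ = 1 ∧ ⟪n, d⟫ = 0 ∧
        ∀ i j, M i j = M₀ * (n i * d j + d i * n j) := by
  have h2 : Real.sqrt 2 * Real.sqrt 2 = 2 := Real.mul_self_sqrt (by norm_num)
  have hs0 : Real.sqrt 2 ≠ 0 := by positivity
  set n : EuclideanSpace ℝ (Fin 3) := WithLp.toLp 2 (fun i => (v i + w i) / Real.sqrt 2) with hn
  set d : EuclideanSpace ℝ (Fin 3) := WithLp.toLp 2 (fun i => (v i - w i) / Real.sqrt 2) with hd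
  simp only [Fin.sum_univ_three] at hv hw hvw
  refine ⟨μ, hμ, n, d, ?_, ?_, ?_, ?_⟩
  · rw [EuclideanSpace.norm_eq]
    have : ∑ i, ‖n i‖ ^ 2 = 1 := by
      simp only [Fin.sum_univ_three, hn, PiLp.toLp_apply, Real.norm_eq_abs, sq_abs]
      field_simp
      nlinarith [h2, hv, hw, hvw]
    rw [this, Real.sqrt_one]
  · rw [EuclideanSpace.norm_eq]
    have : ∑ i, ‖d i‖ ^ 2 = 1 := by
      simp only [Fin.sum_univ_three, hd, PiLp.toLp_apply, Real.norm_eq_abs, sq_abs]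
      field_simp
      nlinarith [h2, hv, hw, hvw]
    rw [this, Real.sqrt_one]
  · simp only [PiLp.inner_apply, RCLike.inner_apply, conj_trivial, Fin.sum_univ_three, hn, hd, PiLp.toLp_apply]
    field_simp
    nlinarith [h2, hv, hw, hvw]
  · intro i j
    rw [hM i j]
    have : n i * d j + d i * n j = v i * v j - w i * w j := by
      simp only [hn, hd, PiLp.toLp_apply]
      field_simp
      rw [Real.sq_sqrt (by norm_num : (0:ℝ) ≤ 2)]
      ring
    rw [this]; ring

lemma dc_key2 (M : Matrix (Fin 3) (Fin 3) ℝ) (μ ν : ℝ) (hμν : μ + ν = 0) (v w : Fin 3 → ℝ)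
    (hv : ∑ i, v i * v i = 1) (hw : ∑ i, w i * w i = 1)
    (hvw : ∑ i, v i * w i = 0)
    (hM : ∀ i j, M i j = μ * (v i * v j) + ν * (w i * w j)) :
    ∃ M₀ : ℝ, 0 ≤ M₀ ∧
      ∃ n d : EuclideanSpace ℝ (Fin 3),
        ‖n‖ = 1 ∧ ‖d‖ = 1 ∧ ⟪n, d⟫ = 0 ∧
        ∀ i j, M i j = M₀ * (n i * d j + d i * n j) := by
  rcases le_or_gt 0 μ with h | h
  · refine dc_key M μ h v w hv hw hvw fun i j => ?_
    rw [hM i j]; have : ν = -μ := by linarith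
    rw [this]
  · refine dc_key M ν (by linarith) w v hw hv (by simpa [mul_comm] using hvw) fun i j => ?_
    rw [hM i j]; have : μ = -ν := by linarith
    rw [this]; ring

theorem double_couple_representation
    (M : Matrix (Fin 3) (Fin 3) ℝ)
    (hsymm : M.IsSymm) (htrace : M.trace = 0) (hdet : M.det = 0) :
    ∃ M₀ : ℝ, 0 ≤ M₀ ∧
      ∃ n d : EuclideanSpace ℝ (Fin 3),
        ‖n‖ = 1 ∧ ‖d‖ = 1 ∧ ⟪n, d⟫ = 0 ∧
        ∀ i j, M i j = M₀ * (n i * d j + d i * n j) := by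
  have hH : M.IsHermitian := by
    rwa [Matrix.IsHermitian, Matrix.conjTranspose_eq_transpose_of_trivial]
  set U : Matrix (Fin 3) (Fin 3) ℝ := (hH.eigenvectorUnitary : Matrix (Fin 3) (Fin 3) ℝ) with hU
  set lam : Fin 3 → ℝ := hH.eigenvalues with hlam
  have hsp := hH.spectral_theorem
  rw [Unitary.conjStarAlgAut_apply] at hsp
  rw [← hU, ← hlam] at hsp
  have hunit : star U * U = 1 := Matrix.mem_unitaryGroup_iff'.mp hH.eigenvectorUnitary.2
  have horth : ∀ k l, (∑ i, U i k * U i l) = if k = l then 1 else 0 := by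
    intro k l
    have := congrFun (congrFun hunit k) l
    simpa [Matrix.mul_apply, Matrix.one_apply, Matrix.star_apply, mul_comm] using this
  have hentry : ∀ i j, M i j = ∑ k, lam k * (U i k * U j k) := by
    intro i j
    conv_lhs => rw [hsp]
    simp only [Matrix.mul_apply, Matrix.diagonal_apply, Function.comp_apply, star_trivial,
      RCLike.ofReal_real_eq_id, id_eq, Matrix.star_apply, mul_ite, mul_zero, ite_mul, zero_mul,
      Finset.sum_ite_eq, Finset.sum_ite_eq', Finset.mem_univ, if_true]
    exact Finset.sum_congr rfl fun k _ => by ring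
  have htr : lam 0 + lam 1 + lam 2 = 0 := by
    have h1 : M.trace = ∑ k, lam k := by
      conv_lhs => rw [hsp]
      rw [Matrix.trace_mul_cycle, hunit, Matrix.one_mul,
        Matrix.trace_diagonal]
      simp [RCLike.ofReal_real_eq_id]
    rw [htrace] at h1
    simpa [Fin.sum_univ_three] using h1.symm
  have hpr : lam 0 * lam 1 * lam 2 = 0 := by
    have h1 := hH.det_eq_prod_eigenvalues
    rw [hdet] at h1
    simpa [Fin.prod_univ_three, mul_assoc] using h1.symm
  have hMe : ∀ i j, M i j = lam 0 * (U i 0 * U j 0) + lam 1 * (U i 1 * U j 1)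
      + lam 2 * (U i 2 * U j 2) := by
    intro i j; rw [hentry i j, Fin.sum_univ_three]
  have hcol : ∀ k l : Fin 3, k ≠ l → (∑ i, U i k * U i l) = 0 := by
    intro k l hkl; rw [horth k l, if_neg hkl]
  have hcol1 : ∀ k : Fin 3, (∑ i, U i k * U i k) = 1 := by
    intro k; rw [horth k k, if_pos rfl]
  rcases mul_eq_zero.mp hpr with h | h2
  · rcases mul_eq_zero.mp h with h0 | h1
    · -- lam 0 = 0, use columns 1 2
      exact dc_key2 M (lam 1) (lam 2) (by linarith) (fun i => U i 1) (fun i => U i 2)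
        (hcol1 1) (hcol1 2) (hcol 1 2 (by decide))
        (fun i j => by rw [hMe i j, h0]; ring)
    · -- lam 1 = 0
      exact dc_key2 M (lam 0) (lam 2) (by linarith) (fun i => U i 0) (fun i => U i 2)
        (hcol1 0) (hcol1 2) (hcol 0 2 (by decide))
        (fun i j => by rw [hMe i j, h1]; ring)
  · -- lam 2 = 0
    exact dc_key2 M (lam 0) (lam 1) (by linarith) (fun i => U i 0) (fun i => U i 1)
      (hcol1 0) (hcol1 1) (hcol 0 1 (by decide))
      (fun i j => by rw [hMe i j, h2]; ring)
end
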